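/- In any algebra (S,*,') satisfying the three axioms, the identity x * x''' = x * x' holds for all x in S. -/
import Mathlib

theorem stmt (S : Type*) (m : S → S → S) (i : S → S)
    (E1 : ∀ x, m (m x (i x)) x = x)
    (E2 : ∀ x y, m (m x (i x)) (m (i y) y) = m (m (i y) y) (m x (i x)))
    (E3 : ∀ x y z, m (m x y) z = m x (m y (i (i z)))) :
    ∀ x, m x (i (i (i x))) = m x (i x) := by
  have L0 : ∀ v0, (m (m v0 (i v0)) v0) = v0 := fun v0 => E1 v0
  have L1 : ∀ v0 v1 v2, (m v0 (m v1 (i (i v2)))) = (m (m v0 v1) v2) := fun v0 v1 v2 => Eq.symm (E3 v0 v1 v2)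
  have L2 : ∀ v0, (m (m v0 (m (m (i v0) (i (i v0))) (i v0))) v0) = v0 := fun v0 => Eq.trans (Eq.symm (congrArg (fun h => (m (m v0 h) v0)) (Eq.symm (L0 (i v0))))) (L0 v0)
  have L3 : ∀ v0, (m v0 (m (m (m (i v0) (i (i v0))) (i v0)) (i (i v0)))) = v0 := fun v0 => Eq.trans (Eq.symm (congrArg (fun h => h) (Eq.symm (L1 v0 (m (m (i v0) (i (i v0))) (i v0)) v0)))) (L2 v0)
  have L4 : ∀ v0, (m v0 (m (i v0) (i (i v0)))) = v0 := fun v0 => Eq.trans (Eq.symm (congrArg (fun h => (m v0 (m h (i (i v0))))) (L0 (i v0)))) (L3 v0)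
  have L5 : ∀ v0 v1, (m (m v0 (m (i (i v1)) (i (i (i v1))))) v1) = (m v0 (i (i v1))) := fun v0 v1 => Eq.symm (Eq.trans (Eq.symm (congrArg (fun h => (m v0 h)) (L0 (i (i v1))))) (L1 v0 (m (i (i v1)) (i (i (i v1)))) v1))
  have L6 : ∀ v0, (m (i v0) (i (i v0))) = (m (i v0) v0) := fun v0 => Eq.symm (Eq.trans (Eq.symm (congrArg (fun h => (m h v0)) (L4 (i v0)))) (L5 (i v0) v0))
  have L7 : ∀ v0, (m (m (i v0) (m (i (i v0)) (i (i (i v0))))) v0) = (m (i v0) v0) := fun v0 => Eq.trans (Eq.symm (congrArg (fun h => h) (Eq.symm (L5 (i v0) v0)))) (L6 v0)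
  have L8 : ∀ v0, (m (m (m (i v0) (i (i v0))) (i v0)) v0) = (m (i v0) v0) := fun v0 => Eq.trans (Eq.symm (congrArg (fun h => (m h v0)) (L1 (i v0) (i (i v0)) (i v0)))) (L7 v0)
  have L9 : ∀ v0, (m (m (m (i v0) v0) (i v0)) v0) = (m (i v0) v0) := fun v0 => Eq.trans (Eq.symm (congrArg (fun h => (m (m h (i v0)) v0)) (L6 v0))) (L8 v0)
  have L10 : ∀ v0, (m (m (i v0) v0) (m (i v0) (i (i v0)))) = (m (i v0) v0) := fun v0 => Eq.trans (Eq.symm (congrArg (fun h => h) (Eq.symm (L1 (m (i v0) v0) (i v0) v0)))) (L9 v0)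
  have L11 : ∀ v0, (m (m (i v0) v0) (m (i v0) v0)) = (m (i v0) v0) := fun v0 => Eq.trans (Eq.symm (congrArg (fun h => (m (m (i v0) v0) h)) (L6 v0))) (L10 v0)
  have L12 : ∀ v0, (m (m (i v0) (i (i v0))) (m (i v0) v0)) = (m (i v0) v0) := fun v0 => Eq.trans (Eq.symm (congrArg (fun h => (m h (m (i v0) v0))) (Eq.symm (L6 v0)))) (L11 v0)
  have L13 : ∀ v0, (m (m (m (m v0 (i v0)) (i (m v0 (i v0)))) (m v0 (i v0))) v0) = v0 := fun v0 => Eq.trans (Eq.symm (congrArg (fun h => (m h v0)) (Eq.symm (L0 (m v0 (i v0)))))) (L0 v0)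
  have L14 : ∀ v0 v1 v2 v3, (m v0 (m v1 (i (i (m v2 (i (i v3))))))) = (m (m (m v0 v1) v2) v3) := fun v0 v1 v2 v3 => Eq.trans (Eq.symm (congrArg (fun h => h) (Eq.symm (L1 v0 v1 (m v2 (i (i v3))))))) (L1 (m v0 v1) v2 v3)
  have L15 : ∀ v0 v1 v2 v3, (m (m v0 v1) (m v2 (i (i v3)))) = (m (m (m v0 v1) v2) v3) := fun v0 v1 v2 v3 => Eq.trans (Eq.symm (congrArg (fun h => h) (L1 v0 v1 (m v2 (i (i v3)))))) (L14 v0 v1 v2 v3)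
  have L16 : ∀ v0 v1 v2, (m (m (m (m v0 (i v0)) v0) v1) v2) = (m v0 (m v1 (i (i v2)))) := fun v0 v1 v2 => Eq.symm (Eq.trans (Eq.symm (congrArg (fun h => (m h (m v1 (i (i v2))))) (L0 v0))) (L15 (m v0 (i v0)) v0 v1 v2))
  have L17 : ∀ v0 v1, (m (m v0 (i v0)) (m v0 (i (i v1)))) = (m v0 v1) := fun v0 v1 => Eq.symm (Eq.trans (Eq.symm (congrArg (fun h => (m h v1)) (L13 v0))) (L16 (m v0 (i v0)) v0 v1))
  have L18 : ∀ v0, (m (i (i (i v0))) (i (i v0))) = (m (i (i (i v0))) v0) := fun v0 => Eq.trans (Eq.symm (congrArg (fun h => h) (L12 (i (i v0))))) (L17 (i (i (i v0))) v0)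
  have L19 : ∀ v0 v1, (m (m (m v0 (i (i v1))) (i v1)) v1) = (m v0 (i (i v1))) := fun v0 v1 => Eq.trans (Eq.symm (congrArg (fun h => (m h v1)) (L1 v0 (i (i v1)) (i v1)))) (L5 v0 v1)
  have L20 : ∀ v0 v1, (m (m (i v0) (i (i v0))) v1) = (m (i v0) (m v0 (i (i v1)))) := fun v0 v1 => Eq.trans (Eq.symm (congrArg (fun h => (m h v1)) (L19 (i v0) v0))) (L16 (i v0) v0 v1)
  have L21 : ∀ v0, (m (i v0) (m v0 (i (i (i v0))))) = (i v0) := fun v0 => Eq.symm (Eq.trans (Eq.symm (congrArg (fun h => h) (L0 (i v0)))) (L20 v0 (i v0)))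
  have L22 : ∀ v0, (m (m (i v0) (i (i v0))) (i v0)) = (i v0) := fun v0 => Eq.trans (Eq.symm (congrArg (fun h => h) (Eq.symm (L20 v0 (i v0))))) (L21 v0)
  have L23 : ∀ v0, (m (i v0) (m (i (i v0)) (i (i (i v0))))) = (i v0) := fun v0 => Eq.trans (Eq.symm (congrArg (fun h => h) (Eq.symm (L1 (i v0) (i (i v0)) (i v0))))) (L22 v0)
  have L24 : ∀ v0, (m (i v0) (m (i (i v0)) (i v0))) = (i v0) := fun v0 => Eq.trans (Eq.symm (congrArg (fun h => (m (i v0) h)) (L6 (i v0)))) (L23 v0)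
  have L25 : ∀ v0, (m (m (i (i v0)) (i (i (i v0)))) v0) = (i (i v0)) := fun v0 => Eq.trans (Eq.symm (congrArg (fun h => h) (L1 (i (i v0)) (i (i (i v0))) v0))) (L24 (i v0))
  have L26 : ∀ v0, (m (m (i (i v0)) (i v0)) v0) = (i (i v0)) := fun v0 => Eq.trans (Eq.symm (congrArg (fun h => (m h v0)) (L6 (i v0)))) (L25 v0)
  have L27 : ∀ v0, (m (m (i (i (i v0))) v0) (i v0)) = (i (i (i v0))) := fun v0 => Eq.trans (Eq.symm (congrArg (fun h => (m h (i v0))) (L18 v0))) (L26 (i v0))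
  have L28 : ∀ v0, (m (m (m (i v0) (i (i v0))) (i v0)) (i (i v0))) = (m (i v0) v0) := fun v0 => Eq.trans (Eq.symm (congrArg (fun h => (m h (i (i v0)))) (Eq.symm (L0 (i v0))))) (L6 v0)
  have L29 : ∀ v0 v1, (m (i v0) (m (i (i v0)) (i (i v1)))) = (m (m (i v0) v0) v1) := fun v0 v1 => Eq.symm (Eq.trans (Eq.symm (congrArg (fun h => (m h v1)) (L28 v0))) (L16 (i v0) (i (i v0)) v1))
  have L30 : ∀ v0 v1, (m (m (m v0 (i v0)) v0) v1) = (m v0 v1) := fun v0 v1 => Eq.trans (Eq.symm (congrArg (fun h => h) (L1 (m v0 (i v0)) v0 v1))) (L17 v0 v1)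
  have L31 : ∀ v0 v1, (m (m (m (i v0) v0) (i v0)) v1) = (m (i v0) v1) := fun v0 v1 => Eq.trans (Eq.symm (congrArg (fun h => (m (m h (i v0)) v1)) (L6 v0))) (L30 (i v0) v1)
  have L32 : ∀ v0 v1, (m (m (m (i v0) (i (i v0))) (i v0)) v1) = (m (i v0) v1) := fun v0 v1 => Eq.trans (Eq.symm (congrArg (fun h => (m (m h (i v0)) v1)) (Eq.symm (L6 v0)))) (L31 v0 v1)
  have L33 : ∀ v0 v1, (m (m v0 (m (i v0) (i (i v0)))) v1) = (m v0 v1) := fun v0 v1 => Eq.trans (Eq.symm (congrArg (fun h => (m h v1)) (Eq.symm (L1 v0 (i v0) v0)))) (L30 v0 v1)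
  have L34 : ∀ v0 v1, (m (m v0 (m (i v0) v0)) v1) = (m v0 v1) := fun v0 v1 => Eq.trans (Eq.symm (congrArg (fun h => (m (m v0 h) v1)) (L6 v0))) (L33 v0 v1)
  have L35 : ∀ v0 v1, (m (m (m (m v0 (i v0)) v0) (m (i v0) v0)) v1) = (m v0 v1) := fun v0 v1 => Eq.trans (Eq.symm (congrArg (fun h => (m h v1)) (Eq.symm (L30 v0 (m (i v0) v0))))) (L34 v0 v1)
  have L36 : ∀ v0 v1, (m (m (i v0) (m (i (i v0)) (i v0))) v1) = (m (i v0) v1) := fun v0 v1 => Eq.trans (Eq.symm (congrArg (fun h => (m h v1)) (L32 v0 (m (i (i v0)) (i v0))))) (L35 (i v0) v1)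
  have L37 : ∀ v0 v1, (m (m (m (i (i v0)) (i v0)) v0) v1) = (m (i (i v0)) v1) := fun v0 v1 => Eq.trans (Eq.symm (congrArg (fun h => (m h v1)) (L29 (i v0) v0))) (L36 (i v0) v1)
  have L38 : ∀ v0 v1, (m (m (i (i v0)) (i v0)) (m v0 (i (i v1)))) = (m (i (i v0)) v1) := fun v0 v1 => Eq.trans (Eq.symm (congrArg (fun h => h) (Eq.symm (L1 (m (i (i v0)) (i v0)) v0 v1)))) (L37 v0 v1)
  have L39 : ∀ v0 v1, (m (m (i v0) v0) (m v1 (i v1))) = (m (m v1 (i v1)) (m (i v0) v0)) := fun v0 v1 => Eq.symm (E2 v1 v0)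
  have L40 : ∀ v0 v1 v2 v3, (m v0 (m v1 (m v2 (i (i (i (i v3))))))) = (m (m v0 (m v1 v2)) v3) := fun v0 v1 v2 v3 => Eq.trans (Eq.symm (congrArg (fun h => (m v0 h)) (Eq.symm (L1 v1 v2 (i (i v3)))))) (L1 v0 (m v1 v2) v3)
  have L41 : ∀ v0 v1, (m (m v0 (m (i (i v1)) (i v1))) v1) = (m v0 (i (i v1))) := fun v0 v1 => Eq.symm (Eq.trans (Eq.symm (congrArg (fun h => (m v0 h)) (L21 (i v1)))) (L40 v0 (i (i v1)) (i v1) v1))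
  have L42 : ∀ v0 v1 v2, (m (m (m v0 v1) (i v2)) v2) = (m (m v0 v1) (m (i v2) v2)) := fun v0 v1 v2 => Eq.symm (Eq.trans (Eq.symm (congrArg (fun h => (m (m v0 v1) h)) (L6 v2))) (L15 v0 v1 (i v2) v2))
  have L43 : ∀ v0 v1, (m (m (m v0 (i v0)) v0) (m (i v1) v1)) = (m (m v0 (i v1)) v1) := fun v0 v1 => Eq.symm (Eq.trans (Eq.symm (congrArg (fun h => (m (m h (i v1)) v1)) (L0 v0))) (L42 (m v0 (i v0)) v0 v1))
  have L44 : ∀ v0 v1, (m (m v0 (i v1)) v1) = (m v0 (m (i v1) v1)) := fun v0 v1 => Eq.symm (Eq.trans (Eq.symm (congrArg (fun h => (m h (m (i v1) v1))) (L0 v0))) (L43 v0 v1))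
  have L45 : ∀ v0, (m (m (i (i (i v0))) v0) (m (i v0) v0)) = (m (i (i (i v0))) v0) := fun v0 => Eq.symm (Eq.trans (Eq.symm (congrArg (fun h => (m h v0)) (L27 v0))) (L44 (m (i (i (i v0))) v0) v0))
  have L46 : ∀ v0 v1, (m (m v0 (i (i v1))) (m (i v1) (i (i v1)))) = (m v0 (i (i v1))) := fun v0 v1 => Eq.trans (Eq.symm (congrArg (fun h => h) (Eq.symm (L1 (m v0 (i (i v1))) (i v1) v1)))) (L19 v0 v1)
  have L47 : ∀ v0 v1, (m (m v0 (i (i v1))) (m (i v1) v1)) = (m v0 (i (i v1))) := fun v0 v1 => Eq.trans (Eq.symm (congrArg (fun h => (m (m v0 (i (i v1))) h)) (L6 v1))) (L46 v0 v1)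
  have L48 : ∀ v0, (m (i (i (i v0))) (i (i (i (i v0))))) = (m (i (i (i v0))) v0) := fun v0 => Eq.trans (Eq.symm (congrArg (fun h => h) (L47 (i (i (i v0))) (i (i v0))))) (L17 (i (i (i v0))) v0)
  have L49 : ∀ v0, (m v0 (m (i v0) v0)) = v0 := fun v0 => Eq.symm (Eq.trans (Eq.symm (congrArg (fun h => h) (L0 v0))) (L44 v0 v0))
  have L50 : ∀ v0, (m (m v0 (m (i v0) v0)) (m (i v0) v0)) = v0 := fun v0 => Eq.trans (Eq.symm (congrArg (fun h => h) (Eq.symm (L34 v0 (m (i v0) v0))))) (L49 v0)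
  have L51 : ∀ v0, (m (m (m v0 (m (i v0) v0)) (i v0)) v0) = v0 := fun v0 => Eq.trans (Eq.symm (congrArg (fun h => h) (Eq.symm (L42 v0 (m (i v0) v0) v0)))) (L50 v0)
  have L52 : ∀ v0, (m (m v0 (m (m (i v0) v0) (i (i (i v0))))) v0) = v0 := fun v0 => Eq.trans (Eq.symm (congrArg (fun h => (m h v0)) (Eq.symm (L1 v0 (m (i v0) v0) (i v0))))) (L51 v0)
  have L53 : ∀ v0, (m v0 (m (m (m (i v0) v0) (i (i (i v0)))) (i (i v0)))) = v0 := fun v0 => Eq.trans (Eq.symm (congrArg (fun h => h) (Eq.symm (L1 v0 (m (m (i v0) v0) (i (i (i v0)))) v0)))) (L52 v0)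
  have L54 : ∀ v0, (m v0 (m (m (i v0) v0) (m (i (i (i v0))) (i (i (i (i v0))))))) = v0 := fun v0 => Eq.trans (Eq.symm (congrArg (fun h => (m v0 h)) (Eq.symm (L1 (m (i v0) v0) (i (i (i v0))) (i (i v0)))))) (L53 v0)
  have L55 : ∀ v0, (m v0 (m (m (i (i (i v0))) (i (i (i (i v0))))) (m (i v0) v0))) = v0 := fun v0 => Eq.trans (Eq.symm (congrArg (fun h => (m v0 h)) (L39 v0 (i (i (i v0)))))) (L54 v0)
  have L56 : ∀ v0, (m v0 (m (m (i (i (i v0))) v0) (m (i v0) v0))) = v0 := fun v0 => Eq.trans (Eq.symm (congrArg (fun h => (m v0 (m h (m (i v0) v0)))) (L48 v0))) (L55 v0)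
  have L57 : ∀ v0, (m v0 (m (i (i (i v0))) v0)) = v0 := fun v0 => Eq.trans (Eq.symm (congrArg (fun h => (m v0 h)) (L45 v0))) (L56 v0)
  have L58 : ∀ v0, (m (m (i v0) v0) (i v0)) = (i v0) := fun v0 => Eq.trans (Eq.symm (congrArg (fun h => h) (L1 (i v0) v0 (i v0)))) (L21 v0)
  have L59 : ∀ v0, (m (m (i (i (i v0))) v0) (i (i (i v0)))) = (i (i (i v0))) := fun v0 => Eq.trans (Eq.symm (congrArg (fun h => (m h (i (i (i v0))))) (L18 v0))) (L58 (i (i v0)))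
  have L60 : ∀ v0, (m (i (i (i v0))) (m v0 (i (i (i (i (i v0))))))) = (i (i (i v0))) := fun v0 => Eq.trans (Eq.symm (congrArg (fun h => h) (Eq.symm (L1 (i (i (i v0))) v0 (i (i (i v0))))))) (L59 v0)
  have L61 : ∀ v0 v1, (m (m v0 (m (i (i (i v1))) v1)) (i v1)) = (m v0 (i (i (i v1)))) := fun v0 v1 => Eq.symm (Eq.trans (Eq.symm (congrArg (fun h => (m v0 h)) (L60 v1))) (L40 v0 (i (i (i v1))) v1 (i v1)))
  have L62 : ∀ v0 v1, (m (m (m (m v0 (i v0)) v0) (i v1)) v1) = (m (m v0 (i v1)) v1) := fun v0 v1 => Eq.trans (Eq.symm (congrArg (fun h => h) (Eq.symm (L42 (m v0 (i v0)) v0 v1)))) (L43 v0 v1)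
  have L63 : ∀ v0 v1, (m v0 (m (i v1) (i (i v1)))) = (m (m v0 (i v1)) v1) := fun v0 v1 => Eq.trans (Eq.symm (congrArg (fun h => h) (L16 v0 (i v1) v1))) (L62 v0 v1)
  have L64 : ∀ v0 v1, (m (m v0 (i (i (i v1)))) (i (i v1))) = (m v0 (m (i (i (i v1))) v1)) := fun v0 v1 => Eq.symm (Eq.trans (Eq.symm (congrArg (fun h => (m v0 h)) (L48 v1))) (L63 v0 (i (i v1))))
  have L65 : ∀ v0, (m (m v0 (i (i (i v0)))) (i (i v0))) = v0 := fun v0 => Eq.trans (Eq.symm (congrArg (fun h => h) (Eq.symm (L64 v0 v0)))) (L57 v0)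
  have L66 : ∀ v0, (m (m (m v0 (m (i (i (i v0))) v0)) (i v0)) (i (i v0))) = v0 := fun v0 => Eq.trans (Eq.symm (congrArg (fun h => (m h (i (i v0)))) (Eq.symm (L61 v0 v0)))) (L65 v0)
  have L67 : ∀ v0, (m (m v0 (i v0)) (i (i v0))) = v0 := fun v0 => Eq.trans (Eq.symm (congrArg (fun h => (m (m h (i v0)) (i (i v0)))) (L57 v0))) (L66 v0)
  have L68 : ∀ v0, (m (m (m v0 (i v0)) (m (i (i v0)) (i v0))) v0) = v0 := fun v0 => Eq.trans (Eq.symm (congrArg (fun h => h) (Eq.symm (L41 (m v0 (i v0)) v0)))) (L67 v0)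
  have L69 : ∀ v0, (m (m (m (i (i v0)) (i v0)) (m v0 (i v0))) v0) = v0 := fun v0 => Eq.trans (Eq.symm (congrArg (fun h => (m h v0)) (Eq.symm (L39 (i v0) v0)))) (L68 v0)
  have L70 : ∀ v0, (m (m (i (i (i v0))) v0) (i v0)) = (i v0) := fun v0 => Eq.trans (Eq.symm (congrArg (fun h => (m h (i v0))) (L38 (i v0) v0))) (L69 (i v0))
  have L71 : ∀ v0, (i (i (i v0))) = (i v0) := fun v0 => Eq.trans (Eq.symm (congrArg (fun h => h) (L27 v0))) (L70 v0)
  intro x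
  exact Eq.trans (congrArg (fun h => (m x h)) (L71 x)) (Eq.symm (rfl : (m x (i x)) = (m x (i x))))
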